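/- Multi-period risk neutral valuation with short sales prohibitions: if Q is a supermartingale measure and H is a self-financing trading strategy with h_m(t)(ω) ≥ 0 for all m = 1,…,M, t = 1,…,T, ω ∈ Ω, then for every 0 ≤ t ≤ T and every A ∈ ℱ_t, Σ_{ω∈A} Q(ω) V*(T)(ω) ≤ Σ_{ω∈A} Q(ω) V*(t)(ω); that is, E_Q[V*(T) | ℱ_t] ≤ V*(t). In particular V*(0) ≥ E_Q[V*(T)]. -/

import Mathlib

open Finset MeasureTheory

variable {Ω : Type*} [Fintype Ω]

/-- A probability measure on the finite sample space `Ω`. -/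
def IsProb (P : Ω → ℝ) : Prop := (∀ ω, 0 ≤ P ω) ∧ ∑ ω, P ω = 1

/-- Expectation of `X` under `P`: `E_P[X] = ∑ ω, P ω * X ω`. -/
def expect (P X : Ω → ℝ) : ℝ := ∑ ω, P ω * X ω

/-- Discounted value process of the strategy `(h0, h)`:
`V*(0) = h0(1) + ∑ m, h m 1 * S m 0` and `V*(t) = h0(t) + ∑ m, h m t * S m t` for `t ≥ 1`. -/
def Vstar {M : ℕ} (S : Fin M → ℕ → Ω → ℝ) (h0 : ℕ → Ω → ℝ)
    (h : Fin M → ℕ → Ω → ℝ) : ℕ → Ω → ℝ := fun t ω =>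
  if t = 0 then h0 1 ω + ∑ m, h m 1 ω * S m 0 ω
  else h0 t ω + ∑ m, h m t ω * S m t ω

/-- Discounted gain process `G*(t) = ∑ m, ∑ u = 1..t, h m u * (S m u − S m (u−1))`. -/
def Gstar {M : ℕ} (S : Fin M → ℕ → Ω → ℝ) (h : Fin M → ℕ → Ω → ℝ) : ℕ → Ω → ℝ :=
  fun t ω => ∑ m, ∑ u ∈ Finset.Icc 1 t, h m u ω * (S m u ω - S m (u - 1) ω)

/-- Self-financing condition, for `t = 1, …, T−1`. -/
def SelfFinancing {M : ℕ} (T : ℕ) (S : Fin M → ℕ → Ω → ℝ) (h0 : ℕ → Ω → ℝ)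
    (h : Fin M → ℕ → Ω → ℝ) : Prop :=
  ∀ t : ℕ, 1 ≤ t → t + 1 ≤ T → ∀ ω,
    (h0 (t + 1) ω - h0 t ω) + ∑ m, (h m (t + 1) ω - h m t ω) * S m t ω = 0

/-- The holdings used on `(t−1, t]` are chosen at time `t−1`:
each `h_m(t)` is `ℱ_{t−1}`-measurable, `t = 1, …, T`. -/
def MeasStrategy {M : ℕ} (T : ℕ) (F : ℕ → MeasurableSpace Ω) (h0 : ℕ → Ω → ℝ)
    (h : Fin M → ℕ → Ω → ℝ) : Prop :=
  ∀ t : ℕ, 1 ≤ t → t ≤ T →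
    Measurable[F (t - 1)] (h0 t) ∧ ∀ m, Measurable[F (t - 1)] (h m t)

/-- Arbitrage under model uncertainty in the multi-period model, given the family
`Pfam` of actual probability measures. -/
def IsArbitrage {M : ℕ} (T : ℕ) (S : Fin M → ℕ → Ω → ℝ) (Pfam : Set (Ω → ℝ))
    (h0 : ℕ → Ω → ℝ) (h : Fin M → ℕ → Ω → ℝ) : Prop :=
  (∀ ω, Vstar S h0 h 0 ω = 0) ∧ (∀ ω, 0 ≤ Vstar S h0 h T ω) ∧
    ∃ P ∈ Pfam, 0 < expect P (Vstar S h0 h T)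

/-- Martingale measure: `E_Q[S*_m(u) ∣ ℱ_t] = S*_m(t)` for all `0 ≤ t ≤ u ≤ T`,
expressed via sums over `ℱ_t`-measurable sets. -/
def IsMartingaleMeasure {M : ℕ} (T : ℕ) (F : ℕ → MeasurableSpace Ω)
    (S : Fin M → ℕ → Ω → ℝ) (Q : Ω → ℝ) : Prop :=
  ∀ (m : Fin M) (t u : ℕ), t ≤ u → u ≤ T → ∀ A : Finset Ω,
    MeasurableSet[F t] (A : Set Ω) →
    ∑ ω ∈ A, Q ω * S m u ω = ∑ ω ∈ A, Q ω * S m t ω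

/-- Supermartingale measure: `E_Q[S*_m(u) ∣ ℱ_t] ≤ S*_m(t)` for all `0 ≤ t ≤ u ≤ T`,
expressed via sums over `ℱ_t`-measurable sets. -/
def IsSupermartingaleMeasure {M : ℕ} (T : ℕ) (F : ℕ → MeasurableSpace Ω)
    (S : Fin M → ℕ → Ω → ℝ) (Q : Ω → ℝ) : Prop :=
  ∀ (m : Fin M) (t u : ℕ), t ≤ u → u ≤ T → ∀ A : Finset Ω,
    MeasurableSet[F t] (A : Set Ω) →
    ∑ ω ∈ A, Q ω * S m u ω ≤ ∑ ω ∈ A, Q ω * S m t ω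

lemma bot_meas_const' {m : MeasurableSpace Ω} (hm : m = ⊥) (f : Ω → ℝ)
    (hf : Measurable[m] f) (ω ω' : Ω) : f ω = f ω' := by
  subst hm
  have h := hf (measurableSet_singleton (f ω'))
  rw [MeasurableSpace.measurableSet_bot_iff] at h
  rcases h with h | h
  · exact absurd (show ω' ∈ f ⁻¹' {f ω'} from rfl) (by simp [h])
  · have : ω ∈ f ⁻¹' {f ω'} := h ▸ Set.mem_univ ω
    exact this

lemma key_nonneg {m : MeasurableSpace Ω} (Q D g : Ω → ℝ)
    (hg : Measurable[m] g) (hg0 : ∀ ω, 0 ≤ g ω)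
    (hD : ∀ B : Finset Ω, MeasurableSet[m] (B : Set Ω) → ∑ ω ∈ B, Q ω * D ω ≤ 0)
    (A : Finset Ω) (hA : MeasurableSet[m] (A : Set Ω)) :
    ∑ ω ∈ A, Q ω * (g ω * D ω) ≤ 0 := by
  classical
  rw [← Finset.sum_fiberwise_of_maps_to (g := g) (t := A.image g)
    (fun x hx => Finset.mem_image_of_mem g hx)]
  apply Finset.sum_nonpos
  intro c hc
  obtain ⟨ω0, hω0, rfl⟩ := Finset.mem_image.mp hc
  have hsum : ∑ ω ∈ A.filter (fun ω => g ω = g ω0), Q ω * (g ω * D ω)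
      = g ω0 * ∑ ω ∈ A.filter (fun ω => g ω = g ω0), Q ω * D ω := by
    rw [Finset.mul_sum]
    apply Finset.sum_congr rfl
    intro ω hω
    have hgω := (Finset.mem_filter.mp hω).2
    rw [hgω]; ring
  rw [hsum]
  have hmeasB : MeasurableSet[m] ((A.filter (fun ω => g ω = g ω0)) : Set Ω) := by
    have : ((A.filter (fun ω => g ω = g ω0)) : Set Ω) = (A : Set Ω) ∩ g ⁻¹' {g ω0} := by
      ext x; simp [Set.mem_inter_iff]
    rw [this]
    exact hA.inter (hg (measurableSet_singleton _))
  exact mul_nonpos_of_nonneg_of_nonpos (hg0 ω0) (hD _ hmeasB)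

/-- Multi-period risk neutral valuation with short sales prohibitions:
`E_Q[V*(T) ∣ ℱ_t] ≤ V*(t)`, and in particular `V*(0) ≥ E_Q[V*(T)]`. -/
theorem multi_period_risk_neutral_valuation_short_sales [Nonempty Ω]
    (T : ℕ) {M : ℕ}
    (F : ℕ → MeasurableSpace Ω)
    (hFmono : ∀ s t : ℕ, s ≤ t → t ≤ T → F s ≤ F t)
    (hF0 : F 0 = ⊥) (hFT : F T = ⊤)
    (S : Fin M → ℕ → Ω → ℝ)
    (hSmeas : ∀ (m : Fin M) (t : ℕ), t ≤ T → Measurable[F t] (S m t))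
    (Q : Ω → ℝ) (hQ : IsProb Q)
    (hQsuper : IsSupermartingaleMeasure T F S Q)
    (h0 : ℕ → Ω → ℝ) (h : Fin M → ℕ → Ω → ℝ)
    (hmeas : MeasStrategy T F h0 h)
    (hshort : ∀ (m : Fin M) (t : ℕ), 1 ≤ t → t ≤ T → ∀ ω, 0 ≤ h m t ω)
    (hsf : SelfFinancing T S h0 h) :
    (∀ t : ℕ, t ≤ T → ∀ A : Finset Ω, MeasurableSet[F t] (A : Set Ω) →
        ∑ ω ∈ A, Q ω * Vstar S h0 h T ω ≤ ∑ ω ∈ A, Q ω * Vstar S h0 h t ω) ∧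
      ∀ ω, expect Q (Vstar S h0 h T) ≤ Vstar S h0 h 0 ω := by
  classical
  -- pointwise one-step difference formula
  have diff : ∀ t : ℕ, t + 1 ≤ T → ∀ ω,
      Vstar S h0 h (t + 1) ω - Vstar S h0 h t ω
        = ∑ m, h m (t + 1) ω * (S m (t + 1) ω - S m t ω) := by
    intro t ht ω
    rcases Nat.eq_zero_or_pos t with rfl | ht1
    · have hv1 : Vstar S h0 h 1 ω = h0 1 ω + ∑ m, h m 1 ω * S m 1 ω := by simp [Vstar]
      have hv0 : Vstar S h0 h 0 ω = h0 1 ω + ∑ m, h m 1 ω * S m 0 ω := by simp [Vstar]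
      have hsub : ∑ m, h m 1 ω * (S m 1 ω - S m 0 ω)
          = ∑ m, h m 1 ω * S m 1 ω - ∑ m, h m 1 ω * S m 0 ω := by
        rw [← Finset.sum_sub_distrib]
        exact Finset.sum_congr rfl fun m _ => by ring
      rw [show (0:ℕ) + 1 = 1 from rfl, hv1, hv0, hsub]; ring
    · have hsf' := hsf t ht1 ht ω
      simp only [Vstar, if_neg (Nat.succ_ne_zero t), if_neg (by omega : t ≠ 0)]
      have e1 : ∑ m, h m (t + 1) ω * (S m (t + 1) ω - S m t ω)
          = ∑ m, h m (t + 1) ω * S m (t + 1) ω - ∑ m, h m (t + 1) ω * S m t ω := by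
        rw [← Finset.sum_sub_distrib]
        exact Finset.sum_congr rfl fun m _ => by ring
      have e2 : ∑ m, (h m (t + 1) ω - h m t ω) * S m t ω
          = ∑ m, h m (t + 1) ω * S m t ω - ∑ m, h m t ω * S m t ω := by
        rw [← Finset.sum_sub_distrib]
        exact Finset.sum_congr rfl fun m _ => by ring
      rw [e2] at hsf'
      rw [e1]; linarith
  -- one step inequality
  have step : ∀ t : ℕ, t + 1 ≤ T → ∀ A : Finset Ω, MeasurableSet[F t] (A : Set Ω) →
      ∑ ω ∈ A, Q ω * Vstar S h0 h (t + 1) ω ≤ ∑ ω ∈ A, Q ω * Vstar S h0 h t ω := by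
    intro t ht A hA
    have hle : ∑ ω ∈ A, Q ω * (Vstar S h0 h (t + 1) ω - Vstar S h0 h t ω) ≤ 0 := by
      have e : ∑ ω ∈ A, Q ω * (Vstar S h0 h (t + 1) ω - Vstar S h0 h t ω)
          = ∑ m, ∑ ω ∈ A, Q ω * (h m (t + 1) ω * (S m (t + 1) ω - S m t ω)) := by
        rw [Finset.sum_comm]
        apply Finset.sum_congr rfl
        intro ω _
        rw [diff t ht ω, Finset.mul_sum]
      rw [e]
      apply Finset.sum_nonpos
      intro m _
      have hgmeas : Measurable[F t] (h m (t + 1)) := by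
        have := (hmeas (t + 1) (by omega) ht).2 m
        simpa using this
      have hg0 : ∀ ω, 0 ≤ h m (t + 1) ω := hshort m (t + 1) (by omega) ht
      have hD : ∀ B : Finset Ω, MeasurableSet[F t] (B : Set Ω) →
          ∑ ω ∈ B, Q ω * (S m (t + 1) ω - S m t ω) ≤ 0 := by
        intro B hB
        have hsup := hQsuper m t (t + 1) (Nat.le_succ t) ht B hB
        have : ∑ ω ∈ B, Q ω * (S m (t + 1) ω - S m t ω)
            = ∑ ω ∈ B, Q ω * S m (t + 1) ω - ∑ ω ∈ B, Q ω * S m t ω := by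
          rw [← Finset.sum_sub_distrib]
          exact Finset.sum_congr rfl fun ω _ => by ring
        rw [this]; linarith
      exact key_nonneg Q (fun ω => S m (t + 1) ω - S m t ω) (h m (t + 1))
        hgmeas hg0 hD A hA
    have e2 : ∑ ω ∈ A, Q ω * (Vstar S h0 h (t + 1) ω - Vstar S h0 h t ω)
        = ∑ ω ∈ A, Q ω * Vstar S h0 h (t + 1) ω - ∑ ω ∈ A, Q ω * Vstar S h0 h t ω := by
      rw [← Finset.sum_sub_distrib]
      exact Finset.sum_congr rfl fun ω _ => by ring
    rw [e2] at hle; linarith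
  -- backward induction
  have main : ∀ k t : ℕ, t + k = T → ∀ A : Finset Ω, MeasurableSet[F t] (A : Set Ω) →
      ∑ ω ∈ A, Q ω * Vstar S h0 h T ω ≤ ∑ ω ∈ A, Q ω * Vstar S h0 h t ω := by
    intro k
    induction k with
    | zero =>
      intro t ht A hA
      rw [show t = T by omega]
    | succ k ih =>
      intro t ht A hA
      have h1 : MeasurableSet[F (t + 1)] (A : Set Ω) :=
        hFmono t (t + 1) (by omega) (by omega) _ hA
      exact le_trans (ih (t + 1) (by omega) A h1) (step t (by omega) A hA)
  have part1 : ∀ t : ℕ, t ≤ T → ∀ A : Finset Ω, MeasurableSet[F t] (A : Set Ω) →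
      ∑ ω ∈ A, Q ω * Vstar S h0 h T ω ≤ ∑ ω ∈ A, Q ω * Vstar S h0 h t ω :=
    fun t htT A hA => main (T - t) t (by omega) A hA
  refine ⟨part1, ?_⟩
  intro ω
  have hU : MeasurableSet[F 0] ((Finset.univ : Finset Ω) : Set Ω) := by
    simp
  have h2 := part1 0 (Nat.zero_le T) Finset.univ hU
  have hV0meas : Measurable[F 0] (Vstar S h0 h 0) := by
    rcases Nat.eq_zero_or_pos T with hT0 | hT1
    · have : F 0 = ⊤ := by simpa [hT0] using hFT
      rw [this]
      intro s _
      trivial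
    · have hm1 := hmeas 1 le_rfl hT1
      have hh0 : Measurable[F 0] (h0 1) := by simpa using hm1.1
      have hh : ∀ m, Measurable[F 0] (h m 1) := fun m => by simpa using hm1.2 m
      have hS0 : ∀ m, Measurable[F 0] (S m 0) := fun m => hSmeas m 0 (Nat.zero_le T)
      have : Measurable[F 0] (fun ω => h0 1 ω + ∑ m, h m 1 ω * S m 0 ω) :=
        hh0.add (Finset.measurable_sum _ fun m _ => (hh m).mul (hS0 m))
      have eV : Vstar S h0 h 0 = (fun ω => h0 1 ω + ∑ m, h m 1 ω * S m 0 ω) := by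
        funext ω; simp [Vstar]
      rw [eV]; exact this
  have hconst : ∀ ω' : Ω, Vstar S h0 h 0 ω' = Vstar S h0 h 0 ω :=
    fun ω' => bot_meas_const' hF0 _ hV0meas ω' ω
  have e3 : ∑ ω' : Ω, Q ω' * Vstar S h0 h 0 ω' = Vstar S h0 h 0 ω := by
    calc ∑ ω' : Ω, Q ω' * Vstar S h0 h 0 ω'
        = ∑ ω' : Ω, Q ω' * Vstar S h0 h 0 ω :=
          Finset.sum_congr rfl fun ω' _ => by rw [hconst ω']
      _ = (∑ ω' : Ω, Q ω') * Vstar S h0 h 0 ω := by rw [Finset.sum_mul]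
      _ = Vstar S h0 h 0 ω := by rw [hQ.2, one_mul]
  calc expect Q (Vstar S h0 h T) = ∑ ω' : Ω, Q ω' * Vstar S h0 h T ω' := rfl
    _ ≤ ∑ ω' : Ω, Q ω' * Vstar S h0 h 0 ω' := h2
    _ = Vstar S h0 h 0 ω := e3
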